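/- Assume M̄ is primitive, and let ρ(A) denote the spectral radius of a matrix A, i.e. the maximum of the moduli of its complex eigenvalues. Then: ρ(M) < 1 if and only if ρ(M̄) < 1; ρ(M) = 1 if and only if ρ(M̄) = 1; and ρ(M) > 1 if and only if ρ(M̄) > 1. (M̄ is subcritical, critical or supercritical exactly when M is.) -/

import Mathlib

open Matrix
open scoped ENNReal

/-- A nonnegative `d × d` matrix is primitive if some power has all entries positive. -/
def IsPrimitiveMat {d : ℕ} (A : Matrix (Fin d) (Fin d) ℝ) : Prop :=
  ∃ n : ℕ, 1 ≤ n ∧ ∀ i j, 0 < (A ^ n) i j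

/-- The spectral radius of a real matrix: the supremum of the moduli of its complex
eigenvalues. -/
noncomputable def matSpectralRadius {d : ℕ} (A : Matrix (Fin d) (Fin d) ℝ) : ℝ≥0∞ :=
  spectralRadius ℂ (A.map (algebraMap ℝ ℂ))

namespace Stmt13Aux

open Finset Filter

variable {d : ℕ}

lemma mulVec_apply' {α : Type*} [NonUnitalNonAssocSemiring α]
    (A : Matrix (Fin d) (Fin d) α) (x : Fin d → α) (i : Fin d) :
    (A *ᵥ x) i = ∑ j, A i j * x j := rfl

lemma mulVec_pos (B : Matrix (Fin d) (Fin d) ℝ) (hB : ∀ i j, 0 < B i j)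
    {x : Fin d → ℝ} (hx : ∀ i, 0 ≤ x i) (hx0 : x ≠ 0) : ∀ i, 0 < (B *ᵥ x) i := by
  obtain ⟨j0, hj0⟩ : ∃ j, x j ≠ 0 := Function.ne_iff.mp hx0
  intro i
  rw [mulVec_apply']
  exact Finset.sum_pos' (fun j _ => mul_nonneg (hB i j).le (hx j))
    ⟨j0, Finset.mem_univ _, mul_pos (hB i j0) ((hx j0).lt_of_ne (Ne.symm hj0))⟩

lemma pow_entry_nonneg (A : Matrix (Fin d) (Fin d) ℝ) (hA : ∀ i j, 0 ≤ A i j) :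
    ∀ m, ∀ i j, 0 ≤ (A ^ m) i j := by
  intro m
  induction m with
  | zero =>
    intro i j
    rw [pow_zero]
    by_cases h : i = j <;> simp [Matrix.one_apply, h]
  | succ m ih =>
    intro i j
    rw [pow_succ, Matrix.mul_apply]
    exact Finset.sum_nonneg fun k _ => mul_nonneg (ih i k) (hA k j)

lemma pow_entry_mono {A B : Matrix (Fin d) (Fin d) ℝ} (hB : ∀ i j, 0 ≤ B i j)
    (hBA : ∀ i j, B i j ≤ A i j) : ∀ m i j, (B ^ m) i j ≤ (A ^ m) i j := by
  have hA : ∀ i j, 0 ≤ A i j := fun i j => (hB i j).trans (hBA i j)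
  intro m
  induction m with
  | zero => intro i j; simp
  | succ m ih =>
    intro i j
    rw [pow_succ, pow_succ, Matrix.mul_apply, Matrix.mul_apply]
    exact Finset.sum_le_sum fun k _ =>
      mul_le_mul (ih i k) (hBA k j) (hB k j) (pow_entry_nonneg A hA m i k)

/-- Collatz–Wielandt comparison: if `a x ≤ A x` and `A y ≤ b y` for positive vectors
`x, y`, then `a ≤ b`. -/
lemma compare (hd : 0 < d) (A : Matrix (Fin d) (Fin d) ℝ) (hA : ∀ i j, 0 ≤ A i j)
    {x y : Fin d → ℝ} (hx : ∀ i, 0 < x i) (hy : ∀ i, 0 < y i)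
    {a b : ℝ} (hax : ∀ i, a * x i ≤ (A *ᵥ x) i) (hby : ∀ i, (A *ᵥ y) i ≤ b * y i) :
    a ≤ b := by
  haveI : Nonempty (Fin d) := Fin.pos_iff_nonempty.mp hd
  obtain ⟨i0, -, hi0⟩ := Finset.exists_mem_eq_sup' Finset.univ_nonempty
    (fun i => x i / y i)
  set s := Finset.univ.sup' Finset.univ_nonempty (fun i => x i / y i) with hs
  have hxle : ∀ j, x j ≤ s * y j := by
    intro j
    have h := Finset.le_sup' (fun i => x i / y i) (Finset.mem_univ j)
    calc x j = x j / y j * y j := (div_mul_cancel₀ _ (hy j).ne').symm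
      _ ≤ s * y j := mul_le_mul_of_nonneg_right h (hy j).le
  have hsy : s * y i0 = x i0 := by rw [hi0]; exact div_mul_cancel₀ _ (hy i0).ne'
  have hs0 : 0 < s := by rw [hi0]; exact div_pos (hx i0) (hy i0)
  have h2 : (A *ᵥ x) i0 ≤ s * (A *ᵥ y) i0 := by
    rw [mulVec_apply', mulVec_apply', Finset.mul_sum]
    refine Finset.sum_le_sum fun j _ => ?_
    calc A i0 j * x j ≤ A i0 j * (s * y j) :=
          mul_le_mul_of_nonneg_left (hxle j) (hA i0 j)
      _ = s * (A i0 j * y j) := by ring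
  have h3 : s * (A *ᵥ y) i0 ≤ s * (b * y i0) :=
    mul_le_mul_of_nonneg_left (hby i0) hs0.le
  have hfin : a * x i0 ≤ b * x i0 := by
    calc a * x i0 ≤ (A *ᵥ x) i0 := hax i0
      _ ≤ s * (b * y i0) := h2.trans h3
      _ = b * (s * y i0) := by ring
      _ = b * x i0 := by rw [hsy]
  exact le_of_mul_le_mul_right (by linarith) (hx i0)

lemma spectrum_exists_eigvec {lam : ℂ} {B : Matrix (Fin d) (Fin d) ℂ}
    (h : lam ∈ spectrum ℂ B) : ∃ w : Fin d → ℂ, w ≠ 0 ∧ B *ᵥ w = lam • w := by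
  rw [spectrum.mem_iff] at h
  have hdet : ((algebraMap ℂ (Matrix (Fin d) (Fin d) ℂ)) lam - B).det = 0 := by
    by_contra hne
    exact h ((Matrix.isUnit_iff_isUnit_det _).mpr (isUnit_iff_ne_zero.mpr hne))
  obtain ⟨w, hw0, hw⟩ := Matrix.exists_mulVec_eq_zero_iff.mpr hdet
  refine ⟨w, hw0, ?_⟩
  rw [Matrix.sub_mulVec] at hw
  have h1 : (algebraMap ℂ (Matrix (Fin d) (Fin d) ℂ)) lam *ᵥ w = lam • w := by
    rw [Algebra.algebraMap_eq_smul_one, Matrix.smul_mulVec, Matrix.one_mulVec]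
  rw [h1] at hw
  exact (sub_eq_zero.mp hw).symm

/-- Any complex eigenvalue of a nonnegative matrix `A` with `A v ≤ c v` for a positive
vector `v` has modulus at most `c`. -/
lemma eig_bound (A : Matrix (Fin d) (Fin d) ℝ) (hA : ∀ i j, 0 ≤ A i j)
    {v : Fin d → ℝ} (hv : ∀ i, 0 < v i) {c : ℝ} (hc : ∀ i, (A *ᵥ v) i ≤ c * v i)
    {lam : ℂ} (hlam : lam ∈ spectrum ℂ (A.map (algebraMap ℝ ℂ))) : ‖lam‖ ≤ c := by
  have hd : 0 < d := by
    rcases Nat.eq_zero_or_pos d with h | h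
    · exfalso
      subst h
      have : IsUnit ((algebraMap ℂ (Matrix (Fin 0) (Fin 0) ℂ)) lam -
          A.map (algebraMap ℝ ℂ)) := by
        refine (Matrix.isUnit_iff_isUnit_det _).mpr ?_
        simp [Matrix.det_fin_zero]
      exact (spectrum.mem_iff.mp hlam) this
    · exact h
  haveI : Nonempty (Fin d) := Fin.pos_iff_nonempty.mp hd
  obtain ⟨w, hw0, hw⟩ := spectrum_exists_eigvec hlam
  obtain ⟨i0, -, hi0⟩ := Finset.exists_mem_eq_sup' Finset.univ_nonempty
    (fun i => ‖w i‖ / v i)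
  set t := Finset.univ.sup' Finset.univ_nonempty (fun i => ‖w i‖ / v i) with ht
  have hwle : ∀ j, ‖w j‖ ≤ t * v j := by
    intro j
    have h := Finset.le_sup' (fun i => ‖w i‖ / v i) (Finset.mem_univ j)
    calc ‖w j‖ = ‖w j‖ / v j * v j := (div_mul_cancel₀ _ (hv j).ne').symm
      _ ≤ t * v j := mul_le_mul_of_nonneg_right h (hv j).le
  have ht0 : 0 < t := by
    obtain ⟨j0, hj0⟩ : ∃ j, w j ≠ 0 := Function.ne_iff.mp hw0
    have h1 : 0 < ‖w j0‖ / v j0 := div_pos (norm_pos_iff.mpr hj0) (hv j0)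
    have h2 := Finset.le_sup' (fun i => ‖w i‖ / v i) (Finset.mem_univ j0)
    rw [← ht] at h2
    exact h1.trans_le h2
  have hwi0 : ‖w i0‖ = t * v i0 := by rw [hi0]; exact (div_mul_cancel₀ _ (hv i0).ne').symm
  have hwi0pos : 0 < ‖w i0‖ := hwi0 ▸ mul_pos ht0 (hv i0)
  have hkey : ‖lam‖ * ‖w i0‖ ≤ c * ‖w i0‖ := by
    have h1 : ‖lam‖ * ‖w i0‖ = ‖((A.map (algebraMap ℝ ℂ)) *ᵥ w) i0‖ := by
      rw [hw]
      simp [norm_mul]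
    have h2 : ‖((A.map (algebraMap ℝ ℂ)) *ᵥ w) i0‖ ≤ ∑ j, A i0 j * ‖w j‖ := by
      rw [mulVec_apply']
      refine (norm_sum_le _ _).trans ?_
      refine Finset.sum_le_sum fun j _ => ?_
      rw [Matrix.map_apply, norm_mul]
      have : ‖(algebraMap ℝ ℂ) (A i0 j)‖ = A i0 j := by
        simp [Complex.norm_real, abs_of_nonneg (hA i0 j)]
      rw [this]
    have h3 : ∑ j, A i0 j * ‖w j‖ ≤ t * (A *ᵥ v) i0 := by
      rw [mulVec_apply', Finset.mul_sum]
      refine Finset.sum_le_sum fun j _ => ?_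
      calc A i0 j * ‖w j‖ ≤ A i0 j * (t * v j) :=
            mul_le_mul_of_nonneg_left (hwle j) (hA i0 j)
        _ = t * (A i0 j * v j) := by ring
    have h4 : t * (A *ᵥ v) i0 ≤ t * (c * v i0) :=
      mul_le_mul_of_nonneg_left (hc i0) ht0.le
    calc ‖lam‖ * ‖w i0‖ = ‖((A.map (algebraMap ℝ ℂ)) *ᵥ w) i0‖ := h1
      _ ≤ ∑ j, A i0 j * ‖w j‖ := h2
      _ ≤ t * (A *ᵥ v) i0 := h3
      _ ≤ t * (c * v i0) := h4
      _ = c * (t * v i0) := by ring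
      _ = c * ‖w i0‖ := by rw [hwi0]
  exact le_of_mul_le_mul_right hkey hwi0pos

/-- If a nonnegative matrix has a positive eigenvector with eigenvalue `r ≥ 0`, then its
spectral radius equals `r`. -/
lemma specRad_eq (hd : 0 < d) (A : Matrix (Fin d) (Fin d) ℝ) (hA : ∀ i j, 0 ≤ A i j)
    {r : ℝ} (hr : 0 ≤ r) {v : Fin d → ℝ} (hv : ∀ i, 0 < v i)
    (heq : A *ᵥ v = r • v) : matSpectralRadius A = ENNReal.ofReal r := by
  haveI : Nonempty (Fin d) := Fin.pos_iff_nonempty.mp hd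
  have hineq : ∀ i, (A *ᵥ v) i ≤ r * v i := by
    intro i; rw [heq]; simp [Pi.smul_apply, smul_eq_mul]
  -- r is an eigenvalue of the complexified matrix
  have hmem : (r : ℂ) ∈ spectrum ℂ (A.map (algebraMap ℝ ℂ)) := by
    rw [spectrum.mem_iff]
    intro hunit
    have hdet : ((algebraMap ℂ (Matrix (Fin d) (Fin d) ℂ)) r -
        A.map (algebraMap ℝ ℂ)).det = 0 := by
      rw [← Matrix.exists_mulVec_eq_zero_iff]
      refine ⟨fun i => (v i : ℂ), ?_, ?_⟩
      · intro h
        have := congrFun h (Classical.arbitrary (Fin d))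
        simp only [Pi.zero_apply, Complex.ofReal_eq_zero] at this
        exact (hv _).ne' this
      · rw [Matrix.sub_mulVec, Algebra.algebraMap_eq_smul_one, Matrix.smul_mulVec,
          Matrix.one_mulVec, sub_eq_zero]
        funext i
        have h1 : (A *ᵥ v) i = r * v i := by rw [heq]; simp [Pi.smul_apply, smul_eq_mul]
        have h2 : ((A.map (algebraMap ℝ ℂ)) *ᵥ fun j => (v j : ℂ)) i
            = ((A *ᵥ v) i : ℂ) := by
          rw [mulVec_apply', mulVec_apply']
          push_cast [Matrix.map_apply]
          rfl
        simp only [Pi.smul_apply, smul_eq_mul] at *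
        rw [h2, h1]
        push_cast
        ring
    exact isUnit_iff_ne_zero.mp ((Matrix.isUnit_iff_isUnit_det _).mp hunit) hdet
  apply le_antisymm
  · rw [matSpectralRadius, spectralRadius]
    refine iSup₂_le fun k hk => ?_
    have hle : ‖k‖ ≤ r := eig_bound A hA hv hineq hk
    calc (‖k‖₊ : ℝ≥0∞) = ENNReal.ofReal ‖k‖ := (ofReal_norm k).symm
      _ ≤ ENNReal.ofReal r := ENNReal.ofReal_le_ofReal hle
  · rw [matSpectralRadius, spectralRadius]
    have h1 : ENNReal.ofReal r = (‖(r : ℂ)‖₊ : ℝ≥0∞) := by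
      rw [show ((‖(r : ℂ)‖₊ : ℝ≥0∞)) = ENNReal.ofReal ‖(r : ℂ)‖ from (ofReal_norm _).symm]
      congr 1
      rw [Complex.norm_real, Real.norm_eq_abs, abs_of_nonneg hr]
    rw [h1]
    exact le_iSup₂ (f := fun k (_ : k ∈ spectrum ℂ (A.map (algebraMap ℝ ℂ))) =>
      (‖k‖₊ : ℝ≥0∞)) (r : ℂ) hmem

/-- Perron–Frobenius existence for primitive nonnegative matrices. -/
lemma perron (hd : 0 < d) (A : Matrix (Fin d) (Fin d) ℝ)
    (hA : ∀ i j, 0 ≤ A i j) (hp : IsPrimitiveMat A) :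
    ∃ r : ℝ, 0 < r ∧ ∃ v : Fin d → ℝ, (∀ i, 0 < v i) ∧ A *ᵥ v = r • v := by
  haveI : Nonempty (Fin d) := Fin.pos_iff_nonempty.mp hd
  obtain ⟨n, hn1, hpow⟩ := hp
  -- rows of A are nonzero
  have hrow : ∀ i, ∃ j, 0 < A i j := by
    intro i
    by_contra h
    push_neg at h
    have hz : ∀ j, A i j = 0 := fun j => le_antisymm (h j) (hA i j)
    obtain ⟨m, rfl⟩ : ∃ m, n = m + 1 := ⟨n - 1, (Nat.succ_pred_eq_of_pos hn1).symm⟩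
    have : (A ^ (m + 1)) i i = 0 := by
      rw [pow_succ', Matrix.mul_apply]
      exact Finset.sum_eq_zero fun k _ => by rw [hz k, zero_mul]
    exact (hpow i i).ne' this
  -- the simplex
  set S : Set (Fin d → ℝ) := {v | (∀ i, 0 ≤ v i) ∧ ∑ i, v i = 1} with hS
  have hScl : IsClosed S := by
    have h1 : IsClosed {v : Fin d → ℝ | ∀ i, 0 ≤ v i} := by
      have : {v : Fin d → ℝ | ∀ i, 0 ≤ v i} = ⋂ i, {v | 0 ≤ v i} := by
        ext v; simp [Set.mem_iInter]
      rw [this]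
      exact isClosed_iInter fun i => isClosed_le continuous_const (continuous_apply i)
    have h2 : IsClosed {v : Fin d → ℝ | ∑ i, v i = 1} :=
      isClosed_eq (continuous_finset_sum _ fun i _ => continuous_apply i) continuous_const
    exact h1.inter h2
  have hScomp : IsCompact S := by
    refine Metric.isCompact_of_isClosed_isBounded hScl ?_
    refine (Metric.isBounded_closedBall (x := (0 : Fin d → ℝ)) (r := 1)).subset ?_
    intro v hv
    rw [Metric.mem_closedBall, dist_zero_right]
    rw [pi_norm_le_iff_of_nonneg zero_le_one]
    intro i
    rw [Real.norm_eq_abs, abs_of_nonneg (hv.1 i)]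
    calc v i ≤ ∑ j, v j := Finset.single_le_sum (fun j _ => hv.1 j) (Finset.mem_univ i)
      _ = 1 := hv.2
  -- the Collatz–Wielandt set
  set T : Set ℝ := {t | ∃ v ∈ S, ∀ i, t * v i ≤ (A *ᵥ v) i} with hT
  have hdR : (0 : ℝ) < d := Nat.cast_pos.mpr hd
  have huS : (fun _ : Fin d => (d : ℝ)⁻¹) ∈ S := by
    constructor
    · intro i; positivity
    · rw [Finset.sum_const, Finset.card_univ, Fintype.card_fin, nsmul_eq_mul]
      field_simp
  -- positive lower bound element of T
  set t0 : ℝ := Finset.univ.inf' Finset.univ_nonempty (fun i => ∑ j, A i j) with ht0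
  have ht0pos : 0 < t0 := by
    rw [ht0]
    refine Finset.lt_inf'_iff _ |>.mpr fun i _ => ?_
    obtain ⟨j, hj⟩ := hrow i
    exact Finset.sum_pos' (fun k _ => hA i k) ⟨j, Finset.mem_univ j, hj⟩
  have ht0T : t0 ∈ T := by
    refine ⟨_, huS, fun i => ?_⟩
    rw [mulVec_apply']
    have h1 : t0 ≤ ∑ j, A i j := by
      have := Finset.inf'_le (fun i => ∑ j, A i j) (Finset.mem_univ i)
      rw [← ht0] at this; exact this
    calc t0 * (d : ℝ)⁻¹ ≤ (∑ j, A i j) * (d : ℝ)⁻¹ := by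
          exact mul_le_mul_of_nonneg_right h1 (by positivity)
      _ = ∑ j, A i j * (d : ℝ)⁻¹ := by rw [Finset.sum_mul]
  have hTne : T.Nonempty := ⟨t0, ht0T⟩
  have hTbdd : BddAbove T := by
    refine ⟨∑ i, ∑ j, A i j, fun t ht => ?_⟩
    obtain ⟨v, hvS, hv⟩ := ht
    obtain ⟨i0, -, hmax⟩ := Finset.exists_max_image Finset.univ v Finset.univ_nonempty
    have hvi0 : 0 < v i0 := by
      by_contra h
      push_neg at h
      have : ∀ j, v j = 0 := fun j =>
        le_antisymm (le_trans (hmax j (Finset.mem_univ j)) h) (hvS.1 j)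
      have : (1 : ℝ) = 0 := by rw [← hvS.2]; exact Finset.sum_eq_zero fun j _ => this j
      norm_num at this
    have h1 : t * v i0 ≤ (∑ j, A i0 j) * v i0 := by
      calc t * v i0 ≤ (A *ᵥ v) i0 := hv i0
        _ = ∑ j, A i0 j * v j := mulVec_apply' A v i0
        _ ≤ ∑ j, A i0 j * v i0 := Finset.sum_le_sum fun j _ =>
            mul_le_mul_of_nonneg_left (hmax j (Finset.mem_univ j)) (hA i0 j)
        _ = (∑ j, A i0 j) * v i0 := by rw [Finset.sum_mul]
    have h2 : t ≤ ∑ j, A i0 j := le_of_mul_le_mul_right (by linarith) hvi0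
    refine h2.trans ?_
    exact Finset.single_le_sum
      (fun i _ => Finset.sum_nonneg fun j _ => hA i j) (Finset.mem_univ i0)
  set r : ℝ := sSup T with hr
  have hr0 : 0 < r := lt_of_lt_of_le ht0pos (le_csSup hTbdd ht0T)
  -- extract a maximizing vector
  have hseq : ∀ k : ℕ, ∃ v ∈ S, ∀ i, (r - ((k : ℝ) + 1)⁻¹) * v i ≤ (A *ᵥ v) i := by
    intro k
    have hlt : r - ((k : ℝ) + 1)⁻¹ < r := by
      have : 0 < ((k : ℝ) + 1)⁻¹ := by positivity
      linarith
    obtain ⟨t, htT, hlt'⟩ := exists_lt_of_lt_csSup hTne hlt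
    obtain ⟨v, hvS, hv⟩ := htT
    exact ⟨v, hvS, fun i =>
      le_trans (mul_le_mul_of_nonneg_right hlt'.le (hvS.1 i)) (hv i)⟩
  choose vs hvsS hvs using hseq
  obtain ⟨x, hxS, φ, hφ, hconv⟩ := hScomp.tendsto_subseq hvsS
  have hx0 : x ≠ 0 := by
    intro h
    rw [h] at hxS
    have := hxS.2
    simp at this
  have hxineq : ∀ i, r * x i ≤ (A *ᵥ x) i := by
    intro i
    have hcoord : Tendsto (fun k => vs (φ k) i) atTop (nhds (x i)) :=
      ((continuous_apply i).tendsto x).comp hconv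
    have hinv : Tendsto (fun k => ((φ k : ℝ) + 1)⁻¹) atTop (nhds 0) := by
      have h1 : Tendsto (fun m : ℕ => ((m : ℝ) + 1)⁻¹) atTop (nhds 0) := by
        simpa [one_div] using tendsto_one_div_add_atTop_nhds_zero_nat (𝕜 := ℝ)
      exact h1.comp hφ.tendsto_atTop
    have hlim1 : Tendsto (fun k => (r - ((φ k : ℝ) + 1)⁻¹) * vs (φ k) i) atTop
        (nhds (r * x i)) := by
      have := (tendsto_const_nhds (x := r) (f := atTop (α := ℕ))).sub hinv
      rw [sub_zero] at this
      exact this.mul hcoord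
    have hlim2 : Tendsto (fun k => (A *ᵥ vs (φ k)) i) atTop (nhds ((A *ᵥ x) i)) := by
      have hcont : Continuous fun u : Fin d → ℝ => (A *ᵥ u) i := by
        show Continuous fun u : Fin d → ℝ => ∑ j, A i j * u j
        exact continuous_finset_sum _ fun j _ => continuous_const.mul (continuous_apply j)
      exact (hcont.tendsto x).comp hconv
    exact le_of_tendsto_of_tendsto' hlim1 hlim2 fun k => hvs (φ k) i
  -- improvement step: x is an eigenvector
  by_cases heq : A *ᵥ x = r • x
  · -- positivity of x
    have hxpow : ∀ m, (A ^ m) *ᵥ x = (r ^ m) • x := by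
      intro m
      induction m with
      | zero => simp [Matrix.one_mulVec]
      | succ m ih =>
        rw [pow_succ', ← Matrix.mulVec_mulVec, ih, Matrix.mulVec_smul, heq,
          pow_succ', smul_smul, mul_comm]
    have hxpos : ∀ i, 0 < x i := by
      intro i
      have h1 := mulVec_pos _ hpow hxS.1 hx0 i
      rw [hxpow n] at h1
      simp only [Pi.smul_apply, smul_eq_mul] at h1
      have hrn : 0 < r ^ n := pow_pos hr0 n
      nlinarith
    exact ⟨r, hr0, x, hxpos, heq⟩
  · exfalso
    have hg : ∀ i, 0 ≤ (A *ᵥ x - r • x) i := by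
      intro i
      simp only [Pi.sub_apply, Pi.smul_apply, smul_eq_mul, sub_nonneg]
      exact hxineq i
    have hgne : A *ᵥ x - r • x ≠ 0 := sub_ne_zero.mpr heq
    set w : Fin d → ℝ := (A ^ n) *ᵥ x with hw
    have hwpos : ∀ i, 0 < w i := mulVec_pos _ hpow hxS.1 hx0
    have hkey : ∀ i, r * w i < (A *ᵥ w) i := by
      have hsub : A *ᵥ w - r • w = (A ^ n) *ᵥ (A *ᵥ x - r • x) := by
        rw [hw, Matrix.mulVec_mulVec, Matrix.mulVec_sub, Matrix.mulVec_mulVec,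
          Matrix.mulVec_smul]
        rw [← pow_succ, ← pow_succ']
      intro i
      have h1 := mulVec_pos _ hpow hg hgne i
      rw [← hsub] at h1
      simp only [Pi.sub_apply, Pi.smul_apply, smul_eq_mul, sub_pos] at h1
      exact h1
    have hsum : 0 < ∑ i, w i := Finset.sum_pos (fun i _ => hwpos i) Finset.univ_nonempty
    set c : ℝ := (∑ i, w i)⁻¹ with hc
    have hcpos : 0 < c := inv_pos.mpr hsum
    have hw'S : c • w ∈ S := by
      constructor
      · intro i
        exact mul_nonneg hcpos.le (hwpos i).le
      · show ∑ i, c * w i = 1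
        rw [← Finset.mul_sum, hc]
        field_simp
    set t : ℝ := Finset.univ.inf' Finset.univ_nonempty (fun i => (A *ᵥ w) i / w i)
      with htd
    have hrt : r < t := by
      rw [htd]
      refine Finset.lt_inf'_iff _ |>.mpr fun i _ => ?_
      rw [lt_div_iff₀ (hwpos i)]
      exact hkey i
    have htw : ∀ i, t * w i ≤ (A *ᵥ w) i := by
      intro i
      have h1 := Finset.inf'_le (fun i => (A *ᵥ w) i / w i) (Finset.mem_univ i)
      rw [← htd] at h1
      rw [le_div_iff₀ (hwpos i)] at h1
      exact h1
    have htT : t ∈ T := by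
      refine ⟨c • w, hw'S, fun i => ?_⟩
      rw [Matrix.mulVec_smul]
      simp only [Pi.smul_apply, smul_eq_mul]
      calc t * (c * w i) = c * (t * w i) := by ring
        _ ≤ c * (A *ᵥ w) i := mul_le_mul_of_nonneg_left (htw i) hcpos.le
    have := le_csSup hTbdd htT
    rw [← hr] at this
    linarith

end Stmt13Aux

/-- Let `M̄` be nonnegative with zero diagonal, `d_i ∈ [0,1)`,
`D = diag(d_1, …, d_d)` and `M = (I - D) M̄ + D`. Assume `M̄` is primitive. Then
`ρ(M) < 1 ↔ ρ(M̄) < 1`, `ρ(M) = 1 ↔ ρ(M̄) = 1` and `ρ(M) > 1 ↔ ρ(M̄) > 1`. -/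
theorem stmt13
    {d : ℕ} (hd : 2 ≤ d)
    (Mbar : Matrix (Fin d) (Fin d) ℝ)
    (hMbar : ∀ i j, 0 ≤ Mbar i j) (hdiag : ∀ i, Mbar i i = 0)
    (dv : Fin d → ℝ) (hdv : ∀ i, 0 ≤ dv i ∧ dv i < 1)
    (M : Matrix (Fin d) (Fin d) ℝ)
    (hM : M = (1 - Matrix.diagonal dv) * Mbar + Matrix.diagonal dv)
    (hprim : IsPrimitiveMat Mbar) :
    (matSpectralRadius M < 1 ↔ matSpectralRadius Mbar < 1) ∧
      (matSpectralRadius M = 1 ↔ matSpectralRadius Mbar = 1) ∧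
      (1 < matSpectralRadius M ↔ 1 < matSpectralRadius Mbar) := by
  have hd0 : 0 < d := lt_of_lt_of_le (by norm_num) hd
  haveI : Nonempty (Fin d) := Fin.pos_iff_nonempty.mp hd0
  -- entrywise description of M
  have hMe : ∀ i j, M i j = (1 - dv i) * Mbar i j + Matrix.diagonal dv i j := by
    intro i j
    rw [hM]
    have h1 : (1 : Matrix (Fin d) (Fin d) ℝ) - Matrix.diagonal dv
        = Matrix.diagonal (fun i => 1 - dv i) := by
      rw [← Matrix.diagonal_one, Matrix.diagonal_sub]
    rw [Matrix.add_apply, h1, Matrix.diagonal_mul]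
  have hMnn : ∀ i j, 0 ≤ M i j := by
    intro i j
    rw [hMe]
    rcases eq_or_ne i j with rfl | h
    · rw [Matrix.diagonal_apply_eq]
      have := hdv i
      nlinarith [hMbar i i]
    · rw [Matrix.diagonal_apply_ne _ h]
      have := hdv i
      nlinarith [hMbar i j]
  -- M dominates ε • Mbar entrywise
  set ε : ℝ := Finset.univ.inf' Finset.univ_nonempty (fun i => 1 - dv i) with hεd
  have hεpos : 0 < ε := by
    rw [hεd]
    exact Finset.lt_inf'_iff _ |>.mpr fun i _ => by linarith [(hdv i).2]
  have hεle : ∀ i j, ε * Mbar i j ≤ M i j := by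
    intro i j
    have h1 : ε ≤ 1 - dv i := by
      have := Finset.inf'_le (fun i => 1 - dv i) (Finset.mem_univ i)
      rw [← hεd] at this
      exact this
    rw [hMe]
    rcases eq_or_ne i j with rfl | h
    · rw [hdiag i, Matrix.diagonal_apply_eq]
      simpa using (hdv i).1
    · rw [Matrix.diagonal_apply_ne _ h, add_zero]
      exact mul_le_mul_of_nonneg_right h1 (hMbar i j)
  have hMprim : IsPrimitiveMat M := by
    obtain ⟨n, hn1, hpow⟩ := hprim
    refine ⟨n, hn1, fun i j => ?_⟩
    have hBnn : ∀ i j, 0 ≤ (ε • Mbar) i j := by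
      intro i j
      rw [Matrix.smul_apply, smul_eq_mul]
      exact mul_nonneg hεpos.le (hMbar i j)
    have hBA : ∀ i j, (ε • Mbar) i j ≤ M i j := by
      intro i j
      rw [Matrix.smul_apply, smul_eq_mul]
      exact hεle i j
    have h1 := Stmt13Aux.pow_entry_mono hBnn hBA n i j
    have h2 : ((ε • Mbar) ^ n) i j = ε ^ n * (Mbar ^ n) i j := by
      rw [smul_pow, Matrix.smul_apply, smul_eq_mul]
    rw [h2] at h1
    exact lt_of_lt_of_le (mul_pos (pow_pos hεpos n) (hpow i j)) h1
  -- Perron roots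
  obtain ⟨rb, hrb0, v, hv, hveq⟩ := Stmt13Aux.perron hd0 Mbar hMbar hprim
  obtain ⟨rm, hrm0, w, hw, hweq⟩ := Stmt13Aux.perron hd0 M hMnn hMprim
  have hrad1 : matSpectralRadius Mbar = ENNReal.ofReal rb :=
    Stmt13Aux.specRad_eq hd0 Mbar hMbar hrb0.le hv hveq
  have hrad2 : matSpectralRadius M = ENNReal.ofReal rm :=
    Stmt13Aux.specRad_eq hd0 M hMnn hrm0.le hw hweq
  -- action of M on the Perron vector of Mbar
  have hMv : ∀ i, (M *ᵥ v) i = ((1 - dv i) * rb + dv i) * v i := by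
    intro i
    rw [Stmt13Aux.mulVec_apply']
    calc ∑ j, M i j * v j
        = ∑ j, ((1 - dv i) * (Mbar i j * v j) + Matrix.diagonal dv i j * v j) := by
          refine Finset.sum_congr rfl fun j _ => ?_
          rw [hMe]
          ring
      _ = (1 - dv i) * ∑ j, Mbar i j * v j + ∑ j, Matrix.diagonal dv i j * v j := by
          rw [Finset.sum_add_distrib, Finset.mul_sum]
      _ = (1 - dv i) * (rb * v i) + dv i * v i := by
          congr 1
          · rw [← Stmt13Aux.mulVec_apply', hveq]
            simp
          · rw [Finset.sum_eq_single i]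
            · rw [Matrix.diagonal_apply_eq]
            · intro b _ hb
              rw [Matrix.diagonal_apply_ne' _ hb, zero_mul]
            · intro h
              exact absurd (Finset.mem_univ i) h
      _ = ((1 - dv i) * rb + dv i) * v i := by ring
  -- Collatz–Wielandt comparison bounds
  set cplus : ℝ := Finset.univ.sup' Finset.univ_nonempty
    (fun i => (1 - dv i) * rb + dv i) with hcp
  set cminus : ℝ := Finset.univ.inf' Finset.univ_nonempty
    (fun i => (1 - dv i) * rb + dv i) with hcm
  have hub : rm ≤ cplus := by
    refine Stmt13Aux.compare hd0 M hMnn hw hv (fun i => ?_) (fun i => ?_)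
    · rw [hweq]
      simp
    · rw [hMv i]
      have h1 : (1 - dv i) * rb + dv i ≤ cplus := by
        have := Finset.le_sup' (fun i => (1 - dv i) * rb + dv i) (Finset.mem_univ i)
        rw [← hcp] at this
        exact this
      exact mul_le_mul_of_nonneg_right h1 (hv i).le
  have hlb : cminus ≤ rm := by
    refine Stmt13Aux.compare hd0 M hMnn hv hw (fun i => ?_) (fun i => ?_)
    · rw [hMv i]
      have h1 : cminus ≤ (1 - dv i) * rb + dv i := by
        have := Finset.inf'_le (fun i => (1 - dv i) * rb + dv i) (Finset.mem_univ i)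
        rw [← hcm] at this
        exact this
      exact mul_le_mul_of_nonneg_right h1 (hv i).le
    · rw [hweq]
      simp
  obtain ⟨ip, -, hip⟩ := Finset.exists_mem_eq_sup' Finset.univ_nonempty
    (fun i => (1 - dv i) * rb + dv i)
  obtain ⟨im, -, him⟩ := Finset.exists_mem_eq_inf' Finset.univ_nonempty
    (fun i => (1 - dv i) * rb + dv i)
  rw [← hcp] at hip
  rw [← hcm] at him
  have key : (rm < 1 ↔ rb < 1) ∧ (rm = 1 ↔ rb = 1) ∧ (1 < rm ↔ 1 < rb) := by
    rcases lt_trichotomy rb 1 with h | h | h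
    · have hm : rm < 1 := by
        have : cplus < 1 := by
          rw [hip]
          nlinarith [(hdv ip).1, (hdv ip).2]
        linarith
      exact ⟨by constructor <;> intro <;> linarith,
        by constructor <;> intro <;> linarith,
        by constructor <;> intro <;> linarith⟩
    · have hm : rm = 1 := by
        have h1 : cplus ≤ 1 := by
          rw [hip, h]
          nlinarith [(hdv ip).1, (hdv ip).2]
        have h2 : (1 : ℝ) ≤ cminus := by
          rw [him, h]
          nlinarith [(hdv im).1, (hdv im).2]
        linarith
      exact ⟨by constructor <;> intro <;> linarith,
        by constructor <;> intro <;> linarith,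
        by constructor <;> intro <;> linarith⟩
    · have hm : 1 < rm := by
        have : 1 < cminus := by
          rw [him]
          nlinarith [(hdv im).1, (hdv im).2]
        linarith
      exact ⟨by constructor <;> intro <;> linarith,
        by constructor <;> intro <;> linarith,
        by constructor <;> intro <;> linarith⟩
  rw [hrad1, hrad2, ENNReal.ofReal_lt_one, ENNReal.ofReal_lt_one,
    ENNReal.ofReal_eq_one, ENNReal.ofReal_eq_one, ENNReal.one_lt_ofReal,
    ENNReal.one_lt_ofReal]
  exact key
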